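/- Let z and ω be complex numbers with |z| < 1 and |ω| = 1. Then (1+z)/((1 − ωz)(1 − ω̄z)) = (1 − z)·Σ_{m=0}^∞ |Σ_{j=0}^m ω^j|² z^m, where ω̄ denotes the complex conjugate of ω; both sides equal Σ_{m=0}^∞ (Σ_{j=−m}^{m} ω^j) z^m, and the series converge absolutely for |z| < 1. -/

import Mathlib

open Complex Filter MeasureTheory Finset HurwitzZeta
open scoped ArithmeticFunction Real Classical

noncomputable section

/-- The finite set of primes `p ≤ X`. -/
def primesUpTo (X : ℝ) : Finset ℕ :=
  (Finset.range (Nat.floor X + 1)).filter (fun p => p.Prime ∧ (p : ℝ) ≤ X)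

/-- The finite set of naturals `n ≤ X`. -/
def natsUpTo (X : ℝ) : Finset ℕ :=
  (Finset.range (Nat.floor X + 1)).filter (fun n => (n : ℝ) ≤ X)

/-- Truncated Euler product `P_X(s,χ)`, defined via the primitive character `χ*` inducing `χ`:
`P_X(s,χ) = ∏_{p ∣ q} (1 - χ*(p) p^{-s}) · exp(∑_{n ≤ X} χ*(n) Λ(n) / (n^s log n))`. -/
def PX {q : ℕ} (X : ℝ) (χ : DirichletCharacter ℂ q) (s : ℂ) : ℂ :=
  (∏ p ∈ q.primeFactors, (1 - χ.primitiveCharacter ((p : ℕ) : ZMod χ.conductor) * (p : ℂ) ^ (-s))) *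
    Complex.exp (∑ n ∈ natsUpTo X,
      χ.primitiveCharacter ((n : ℕ) : ZMod χ.conductor) * (Λ n : ℂ) / ((n : ℂ) ^ s * (Real.log n : ℂ)))

/-- `𝓟_X^ℓ(s) = ∏_χ P_X(s,χ)^{ℓ_χ}`. -/
def PXl {q : ℕ} (X : ℝ) (ℓ : DirichletCharacter ℂ q → ℕ) (s : ℂ) : ℂ :=
  ∏ χ : DirichletCharacter ℂ q, (PX X χ s) ^ (ℓ χ)

/-- A Dirichlet character as an arithmetic function. -/
def chiArith {q : ℕ} (χ : DirichletCharacter ℂ q) : ArithmeticFunction ℂ :=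
  ⟨fun n => if n = 0 then 0 else χ ((n : ℕ) : ZMod q), by simp⟩

/-- `d_ℓ`, the coefficients of the Dirichlet series of `𝓛^ℓ(s) = ∏_χ L(s,χ)^{ℓ_χ}`,
i.e. the Dirichlet convolution product `∏_χ χ^{*ℓ_χ}`. -/
def dcoef {q : ℕ} (ℓ : DirichletCharacter ℂ q → ℕ) : ArithmeticFunction ℂ :=
  ∏ χ : DirichletCharacter ℂ q, (chiArith χ) ^ (ℓ χ)

/-- `P*_X(s,χ) = ∏_{p ≤ X}(1 − χ(p)p^{−s})^{−1} · ∏_{√X < p ≤ X}(1 + χ(p)²/(2p^{2s}))^{−1}`. -/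
def PstarX {q : ℕ} (X : ℝ) (χ : DirichletCharacter ℂ q) (s : ℂ) : ℂ :=
  ((primesUpTo X).prod (fun p : ℕ => (1 - χ ((p : ℕ) : ZMod q) * (p : ℂ) ^ (-s))⁻¹)) *
    ((primesUpTo X).filter (fun p : ℕ => Real.sqrt X < (p : ℝ))).prod
      (fun p : ℕ => (1 + χ ((p : ℕ) : ZMod q) ^ 2 / (2 * (p : ℂ) ^ (2 * s)))⁻¹)

/-- `𝓟*_X^ℓ(s) = ∏_χ P*_X(s,χ)^{ℓ_χ}`. -/
def PstarXl {q : ℕ} (X : ℝ) (ℓ : DirichletCharacter ℂ q → ℕ) (s : ℂ) : ℂ :=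
  ∏ χ : DirichletCharacter ℂ q, (PstarX X χ s) ^ (ℓ χ)

/-- `Q_X(s,χ) = ∏_{p ≤ √X}(1 − χ(p)p^{−s}) · ∏_{√X < p ≤ X}(1 − χ(p)p^{−s} + χ(p)²/(2p^{2s}))`. -/
def QX {q : ℕ} (X : ℝ) (χ : DirichletCharacter ℂ q) (s : ℂ) : ℂ :=
  (((primesUpTo X).filter (fun p : ℕ => (p : ℝ) ≤ Real.sqrt X)).prod
      (fun p : ℕ => 1 - χ ((p : ℕ) : ZMod q) * (p : ℂ) ^ (-s))) *
    ((primesUpTo X).filter (fun p : ℕ => Real.sqrt X < (p : ℝ))).prod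
      (fun p : ℕ => 1 - χ ((p : ℕ) : ZMod q) * (p : ℂ) ^ (-s)
        + χ ((p : ℕ) : ZMod q) ^ 2 / (2 * (p : ℂ) ^ (2 * s)))

/-- `𝓠_X^ℓ(s) = ∏_χ Q_X(s,χ)^{ℓ_χ}`. -/
def QXl {q : ℕ} (X : ℝ) (ℓ : DirichletCharacter ℂ q → ℕ) (s : ℂ) : ℂ :=
  ∏ χ : DirichletCharacter ℂ q, (QX X χ s) ^ (ℓ χ)

/-- `𝓛^ℓ(s) = ∏_χ L(s,χ)^{ℓ_χ}`. -/
def Ll {q : ℕ} [NeZero q] (ℓ : DirichletCharacter ℂ q → ℕ) (s : ℂ) : ℂ :=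
  ∏ χ : DirichletCharacter ℂ q, (DirichletCharacter.LFunction χ s) ^ (ℓ χ)

/-- GRH for the Dirichlet L-functions modulo `q`: every zero `ρ` of `L(s,χ)` with
`0 < Re ρ < 1` satisfies `Re ρ = 1/2`. -/
def GRHmod (q : ℕ) [NeZero q] : Prop :=
  ∀ χ : DirichletCharacter ℂ q, ∀ ρ : ℂ,
    DirichletCharacter.LFunction χ ρ = 0 → 0 < ρ.re → ρ.re < 1 → ρ.re = 1 / 2

end

lemma one_sub_ne (u : ℂ) (hu : ‖u‖ < 1) : 1 - u ≠ 0 := by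
  intro h
  rw [sub_eq_zero] at h
  rw [← h] at hu
  simp at hu

lemma geom_sq (w : ℂ) : ∀ n : ℕ,
    (∑ j ∈ range (n + 1), w ^ j) ^ 2
      = (∑ j ∈ range (2 * n + 1), w ^ j) + w * (∑ j ∈ range n, w ^ j) ^ 2 := by
  intro n
  induction n with
  | zero => simp
  | succ n ih =>
    have h : 2 * (n + 1) + 1 = (2 * n + 1) + 1 + 1 := by ring
    rw [h, sum_range_succ (n := n + 1), sum_range_succ (n := n),
      sum_range_succ (n := 2 * n + 1 + 1), sum_range_succ (n := 2 * n + 1)]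
    rw [sum_range_succ (n := n)] at ih
    linear_combination ih

lemma sum_Icc_zpow (w : ℂ) (hw : w ≠ 0) (n : ℕ) :
    (∑ j ∈ Finset.Icc (-(n : ℤ)) (n : ℤ), w ^ j)
      = (w ^ n)⁻¹ * ∑ k ∈ range (2 * n + 1), w ^ k := by
  have himg : Finset.Icc (-(n : ℤ)) (n : ℤ)
      = (range (2 * n + 1)).image (fun k : ℕ => (k : ℤ) - n) := by
    ext x
    simp only [Finset.mem_Icc, Finset.mem_image, Finset.mem_range]
    constructor
    · intro hx
      exact ⟨(x + n).toNat, by omega, by omega⟩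
    · rintro ⟨k, hk, rfl⟩
      omega
  rw [himg, Finset.sum_image (by intro a _ b _ h; have h' : (a : ℤ) - n = (b : ℤ) - n := h; omega), Finset.mul_sum]
  refine Finset.sum_congr rfl fun k _ => ?_
  rw [zpow_sub₀ hw, zpow_natCast, zpow_natCast]
  field_simp

lemma normSq_geom_eq (w : ℂ) (hw : ‖w‖ = 1) (m : ℕ) :
    (Complex.ofReal (‖∑ j ∈ range (m + 1), w ^ j‖ ^ 2))
      = (∑ j ∈ range (m + 1), w ^ j) ^ 2 * (w ^ m)⁻¹ := by
  have hw0 : w ≠ 0 := by intro h; rw [h] at hw; simp at hw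
  have hconj : (starRingEnd ℂ) w = w⁻¹ :=
    (Complex.inv_eq_conj hw).symm
  have h1 : (Complex.ofReal (‖∑ j ∈ range (m + 1), w ^ j‖ ^ 2))
      = (∑ j ∈ range (m + 1), w ^ j) * (starRingEnd ℂ) (∑ j ∈ range (m + 1), w ^ j) := by
    rw [Complex.mul_conj']
    push_cast
    ring
  rw [h1, map_sum]
  have h2 : ∀ j ∈ range (m + 1), (starRingEnd ℂ) (w ^ j) = w ^ (m - j) * (w ^ m)⁻¹ := by
    intro j hj
    rw [mem_range] at hj
    rw [map_pow, hconj, pow_sub₀ w hw0 (by omega), inv_pow]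
    field_simp
  rw [Finset.sum_congr rfl h2, ← Finset.sum_mul]
  have h3 : ∑ j ∈ range (m + 1), w ^ (m - j) = ∑ j ∈ range (m + 1), w ^ j := by
    have := Finset.sum_range_reflect (fun j => w ^ j) (m + 1)
    simpa using this
  rw [h3]
  ring

lemma norm_sq_rec (w : ℂ) (hw : ‖w‖ = 1) (m : ℕ) :
    (Complex.ofReal (‖∑ j ∈ range (m + 1 + 1), w ^ j‖ ^ 2))
      = (∑ j ∈ Finset.Icc (-((m : ℤ) + 1)) ((m : ℤ) + 1), w ^ j)
        + Complex.ofReal (‖∑ j ∈ range (m + 1), w ^ j‖ ^ 2) := by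
  have hw0 : w ≠ 0 := by intro h; rw [h] at hw; simp at hw
  have hIcc : ((m : ℤ) + 1) = ((m + 1 : ℕ) : ℤ) := by push_cast; ring
  rw [normSq_geom_eq w hw (m + 1), normSq_geom_eq w hw m, hIcc]
  rw [show (-(((m : ℕ) + 1 : ℕ) : ℤ)) = -(( (m+1 : ℕ) : ℤ)) from rfl]
  rw [sum_Icc_zpow w hw0 (m + 1)]
  have := geom_sq w (m + 1)
  have hpow : (w ^ (m + 1) : ℂ) ≠ 0 := pow_ne_zero _ hw0
  have hpow' : (w ^ m : ℂ) ≠ 0 := pow_ne_zero _ hw0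
  field_simp
  linear_combination (w ^ m) * this

/-- For `|z| < 1` and `|w| = 1` (`w` playing the role of `ω`):
`(1+z)/((1−wz)(1−w̄z)) = (1−z) Σ_{m≥0} |Σ_{j=0}^m w^j|² z^m`, both sides being equal to
`Σ_{m≥0} (Σ_{j=−m}^m w^j) z^m`, with both series converging absolutely. -/
theorem power_series_identity (z w : ℂ) (hz : ‖z‖ < 1) (hw : ‖w‖ = 1) :
    Summable (fun m : ℕ =>
      ‖Complex.ofReal (‖(Finset.range (m + 1)).sum (fun j : ℕ => w ^ j)‖ ^ 2) * z ^ m‖) ∧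
    Summable (fun m : ℕ =>
      ‖(Finset.Icc (-(m : ℤ)) (m : ℤ)).sum (fun j : ℤ => w ^ j) * z ^ m‖) ∧
    (1 + z) / ((1 - w * z) * (1 - (starRingEnd ℂ w) * z))
      = (1 - z) * ∑' m : ℕ,
          Complex.ofReal (‖(Finset.range (m + 1)).sum (fun j : ℕ => w ^ j)‖ ^ 2) * z ^ m ∧
    (1 + z) / ((1 - w * z) * (1 - (starRingEnd ℂ w) * z))
      = ∑' m : ℕ, (Finset.Icc (-(m : ℤ)) (m : ℤ)).sum (fun j : ℤ => w ^ j) * z ^ m := by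
  have hw0 : w ≠ 0 := by intro h; rw [h] at hw; simp at hw
  have hconj : (starRingEnd ℂ) w = w⁻¹ := (Complex.inv_eq_conj hw).symm
  have hr : ‖(‖z‖ : ℝ)‖ < 1 := by rwa [Real.norm_eq_abs, abs_norm]
  set f : ℕ → ℂ := fun m =>
    Complex.ofReal (‖(Finset.range (m + 1)).sum (fun j : ℕ => w ^ j)‖ ^ 2) * z ^ m with hf_def
  set g : ℕ → ℂ := fun m =>
    (Finset.Icc (-(m : ℤ)) (m : ℤ)).sum (fun j : ℤ => w ^ j) * z ^ m with hg_def
  -- summability of f in norm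
  have hsum1 : Summable (fun m : ℕ => ‖f m‖) := by
    have hmaj : Summable (fun m : ℕ => ((m : ℝ) + 1) ^ 2 * ‖z‖ ^ m) := by
      have h1 := summable_pow_mul_geometric_of_norm_lt_one (R := ℝ) 2 hr
      have h2 := summable_pow_mul_geometric_of_norm_lt_one (R := ℝ) 1 hr
      have h3 := summable_geometric_of_norm_lt_one hr
      exact ((h1.add (h2.mul_left 2)).add h3).congr (fun m => by push_cast; ring)
    refine Summable.of_nonneg_of_le (fun m => norm_nonneg _) (fun m => ?_) hmaj
    have hS : ‖(Finset.range (m + 1)).sum (fun j : ℕ => w ^ j)‖ ≤ (m : ℝ) + 1 := by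
      calc ‖(Finset.range (m + 1)).sum (fun j : ℕ => w ^ j)‖
          ≤ ∑ j ∈ range (m + 1), ‖w ^ j‖ := norm_sum_le _ _
        _ = (m : ℝ) + 1 := by simp [norm_pow, hw]
    rw [hf_def]
    simp only [norm_mul, Complex.norm_real, norm_pow, norm_norm]
    exact mul_le_mul_of_nonneg_right
      (pow_le_pow_left₀ (norm_nonneg _) hS 2) (by positivity)
  -- summability of g in norm
  have hsum2 : Summable (fun m : ℕ => ‖g m‖) := by
    have hmaj : Summable (fun m : ℕ => (2 * (m : ℝ) + 1) * ‖z‖ ^ m) := by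
      have h2 := summable_pow_mul_geometric_of_norm_lt_one (R := ℝ) 1 hr
      have h3 := summable_geometric_of_norm_lt_one hr
      exact ((h2.mul_left 2).add h3).congr (fun m => by push_cast; ring)
    refine Summable.of_nonneg_of_le (fun m => norm_nonneg _) (fun m => ?_) hmaj
    have hT : ‖(Finset.Icc (-(m : ℤ)) (m : ℤ)).sum (fun j : ℤ => w ^ j)‖ ≤ 2 * (m : ℝ) + 1 := by
      calc ‖(Finset.Icc (-(m : ℤ)) (m : ℤ)).sum (fun j : ℤ => w ^ j)‖
          ≤ ∑ j ∈ Finset.Icc (-(m : ℤ)) (m : ℤ), ‖w ^ j‖ := norm_sum_le _ _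
        _ = (Finset.Icc (-(m : ℤ)) (m : ℤ)).card := by simp [norm_zpow, hw]
        _ = 2 * (m : ℝ) + 1 := by
            rw [Int.card_Icc,
              show ((m : ℤ) + 1 - -(m : ℤ)) = ((2 * m + 1 : ℕ) : ℤ) by push_cast; ring,
              Int.toNat_natCast]
            push_cast
            ring
    rw [hg_def]
    simp only [norm_mul, norm_pow]
    exact mul_le_mul_of_nonneg_right hT (by positivity)
  have hfs : Summable f := hsum1.of_norm
  have hgs : Summable g := hsum2.of_norm
  -- value of ∑' g
  have hwz : ‖w * z‖ < 1 := by rw [norm_mul, hw, one_mul]; exact hz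
  have hwz' : ‖w⁻¹ * z‖ < 1 := by rw [norm_mul, norm_inv, hw, inv_one, one_mul]; exact hz
  have hd1 : 1 - w * z ≠ 0 := one_sub_ne _ hwz
  have hd2 : 1 - w⁻¹ * z ≠ 0 := one_sub_ne _ hwz'
  have hz1 : (1 : ℂ) - z ≠ 0 := one_sub_ne _ hz
  have hTsum : ∑' m : ℕ, g m
      = (1 + z) / ((1 - w * z) * (1 - (starRingEnd ℂ w) * z)) := by
    rw [hconj]
    by_cases hw1 : w = 1
    · subst hw1
      have hgm : ∀ m : ℕ, g m = 2 * ((m : ℂ) * z ^ m) + z ^ m := by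
        intro m
        rw [hg_def]
        simp only [one_zpow, Finset.sum_const, nsmul_eq_mul]
        rw [Int.card_Icc,
          show ((m : ℤ) + 1 - -(m : ℤ)) = ((2 * m + 1 : ℕ) : ℤ) by push_cast; ring,
          Int.toNat_natCast]
        push_cast
        ring
      have hsm : Summable (fun m : ℕ => (m : ℂ) * z ^ m) :=
        (summable_pow_mul_geometric_of_norm_lt_one (R := ℂ) 1 hz).congr (fun m => by ring)
      have hsg : Summable (fun m : ℕ => (z : ℂ) ^ m) := summable_geometric_of_norm_lt_one hz
      calc ∑' m : ℕ, g m = ∑' m : ℕ, (2 * ((m : ℂ) * z ^ m) + z ^ m) := tsum_congr hgm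
        _ = 2 * ∑' m : ℕ, (m : ℂ) * z ^ m + ∑' m : ℕ, z ^ m := by
            rw [Summable.tsum_add (hsm.mul_left 2) hsg, tsum_mul_left]
        _ = 2 * (z / (1 - z) ^ 2) + (1 - z)⁻¹ := by
            rw [tsum_coe_mul_geometric_of_norm_lt_one hz, tsum_geometric_of_norm_lt_one hz]
        _ = (1 + z) / ((1 - 1 * z) * (1 - (1 : ℂ)⁻¹ * z)) := by
            rw [inv_one, one_mul]
            field_simp
            ring
    · have hw1' : w - 1 ≠ 0 := sub_ne_zero.2 hw1
      have hgm : ∀ m : ℕ, g m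
          = (w / (w - 1)) * (w * z) ^ m - (w - 1)⁻¹ * (w⁻¹ * z) ^ m := by
        intro m
        rw [hg_def]
        simp only
        rw [sum_Icc_zpow w hw0 m, geom_sum_eq hw1 (2 * m + 1)]
        rw [mul_pow, mul_pow, inv_pow]
        field_simp
        ring
      have hs1 : Summable (fun m : ℕ => (w / (w - 1)) * (w * z) ^ m) :=
        (summable_geometric_of_norm_lt_one hwz).mul_left _
      have hs2 : Summable (fun m : ℕ => (w - 1)⁻¹ * (w⁻¹ * z) ^ m) :=
        (summable_geometric_of_norm_lt_one hwz').mul_left _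
      calc ∑' m : ℕ, g m
          = ∑' m : ℕ, ((w / (w - 1)) * (w * z) ^ m - (w - 1)⁻¹ * (w⁻¹ * z) ^ m) :=
            tsum_congr hgm
        _ = (w / (w - 1)) * ∑' m : ℕ, (w * z) ^ m
            - (w - 1)⁻¹ * ∑' m : ℕ, (w⁻¹ * z) ^ m := by
            rw [Summable.tsum_sub hs1 hs2, tsum_mul_left, tsum_mul_left]
        _ = (w / (w - 1)) * (1 - w * z)⁻¹ - (w - 1)⁻¹ * (1 - w⁻¹ * z)⁻¹ := by
            rw [tsum_geometric_of_norm_lt_one hwz, tsum_geometric_of_norm_lt_one hwz']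
        _ = (1 + z) / ((1 - w * z) * (1 - w⁻¹ * z)) := by
            have hwz0 : w - z ≠ 0 := by
              intro h
              rw [sub_eq_zero] at h
              rw [← h] at hz
              rw [hw] at hz
              exact absurd hz (by norm_num)
            rw [eq_div_iff (mul_ne_zero hd1 hd2)]
            field_simp
            ring
  -- the recurrence and Abel summation
  have hrec : ∀ m : ℕ, f (m + 1) = g (m + 1) + z * f m := by
    intro m
    rw [hf_def, hg_def]
    simp only
    have := norm_sq_rec w hw m
    rw [show ((m + 1 : ℕ) : ℤ) = (m : ℤ) + 1 by push_cast; ring]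
    rw [show (m + 1 + 1 : ℕ) = m + 2 from rfl] at this ⊢
    rw [this]
    ring
  have hF : ∑' m, f m = ∑' m, g m + z * ∑' m, f m := by
    have e1 : ∑' m, f m = f 0 + ∑' m, f (m + 1) := Summable.tsum_eq_zero_add hfs
    have e2 : ∑' m, g m = g 0 + ∑' m, g (m + 1) := Summable.tsum_eq_zero_add hgs
    have hgs' : Summable (fun m => g (m + 1)) := (summable_nat_add_iff 1).2 hgs
    have e3 : ∑' m, f (m + 1) = ∑' m, g (m + 1) + z * ∑' m, f m := by
      rw [← tsum_mul_left (a := z) (f := f), ← Summable.tsum_add hgs' (hfs.mul_left z)]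
      exact tsum_congr hrec
    have hf0 : f 0 = 1 := by rw [hf_def]; simp
    have hg0 : g 0 = 1 := by rw [hg_def]; simp
    conv_lhs => rw [e1]
    rw [e3, e2, hf0, hg0]
    ring
  refine ⟨hsum1, hsum2, ?_, hTsum.symm⟩
  rw [← hTsum]
  linear_combination -hF
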